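/- arXiv:1609.07675 — 2 statements merged into one kernel-verified Lean document; each statement's English description precedes it below -/
import Mathlib

section
/- On the upper half-space model {(z,w) ∈ ℂ × ℍ} with w₂ = Im w, the 2-form Ω = −i( dw∧dw̄/w₂² + w₂ dz∧dz̄ ) satisfies dΩ = θ ∧ Ω with θ = dw₂/w₂; i.e., Ω is locally conformally symplectic (in fact locally conformally Kähler) with Lee form θ. -/
open Finset

/- Real coordinates on `ℂ × ℍ`: index `0 ↦ x`, `1 ↦ y` (`z = x + iy`),
`2 ↦ w₁`, `3 ↦ w₂` (`w = w₁ + i w₂`, with `w₂ > 0` on `ℍ`).  Forms are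
represented by their coefficient functions relative to the constant coframe
`dx i`, with values in the exterior algebra of `ℝ⁴`. -/

/-- The coordinate 1-forms `dx, dy, dw₁, dw₂` as exterior algebra elements. -/
noncomputable def dxE (i : Fin 4) : ExteriorAlgebra ℝ (Fin 4 → ℝ) :=
  ExteriorAlgebra.ι ℝ (Pi.single i 1)

/-- The 1-form `∑ aᵢ dxᵢ` evaluated at `p`. -/
noncomputable def oneForm (a : Fin 4 → (Fin 4 → ℝ) → ℝ) (p : Fin 4 → ℝ) :
    ExteriorAlgebra ℝ (Fin 4 → ℝ) := ∑ i, a i p • dxE i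

/-- The 2-form `∑ cᵢⱼ dxᵢ ∧ dxⱼ` evaluated at `p`. -/
noncomputable def twoForm (c : Fin 4 → Fin 4 → (Fin 4 → ℝ) → ℝ) (p : Fin 4 → ℝ) :
    ExteriorAlgebra ℝ (Fin 4 → ℝ) := ∑ i, ∑ j, c i j p • (dxE i * dxE j)

/-- Exterior derivative of the 2-form with coefficients `c`, at `p`. -/
noncomputable def extd2 (c : Fin 4 → Fin 4 → (Fin 4 → ℝ) → ℝ) (p : Fin 4 → ℝ) :
    ExteriorAlgebra ℝ (Fin 4 → ℝ) :=
  ∑ k, ∑ i, ∑ j, fderiv ℝ (c i j) p (Pi.single k 1) • (dxE k * (dxE i * dxE j))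

/-- The Lee form `θ = dw₂/w₂`. -/
noncomputable def leeCoef : Fin 4 → (Fin 4 → ℝ) → ℝ :=
  fun i p => if i = 3 then (p 3)⁻¹ else 0

/-- The coefficients of `Ω = -i(dw∧dw̄/w₂² + w₂ dz∧dz̄)
    = -(2/w₂²) dw₁∧dw₂ - 2w₂ dx∧dy`. -/
noncomputable def bigOmegaCoef : Fin 4 → Fin 4 → (Fin 4 → ℝ) → ℝ :=
  fun i j p =>
    if i = 2 ∧ j = 3 then -2 / (p 3) ^ 2
    else if i = 0 ∧ j = 1 then -2 * p 3 else 0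

lemma dxE_sq (i : Fin 4) : dxE i * dxE i = 0 := ExteriorAlgebra.ι_sq_zero _

lemma dxE_swap (i j : Fin 4) : dxE i * dxE j = -(dxE j * dxE i) := by
  have := ExteriorAlgebra.ι_add_mul_swap (R := ℝ) (Pi.single i (1:ℝ) : Fin 4 → ℝ) (Pi.single j 1)
  rw [dxE, dxE, eq_neg_iff_add_eq_zero]; exact this

lemma fd_main (p : Fin 4 → ℝ) (h : p 3 ≠ 0) (k : Fin 4) :
    fderiv ℝ (fun p : Fin 4 → ℝ => -2 / (p 3) ^ 2) p (Pi.single k 1)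
      = if k = 3 then 4 / (p 3) ^ 3 else 0 := by
  have hπ : HasFDerivAt (fun q : Fin 4 → ℝ => q 3)
      (ContinuousLinearMap.proj 3 : (Fin 4 → ℝ) →L[ℝ] ℝ) p := by
    exact (ContinuousLinearMap.proj (R := ℝ) (φ := fun _ : Fin 4 => ℝ) 3).hasFDerivAt (x := p)
  have h1 : HasDerivAt (fun x : ℝ => -2 / x ^ 2) (4 / (p 3) ^ 3) (p 3) := by
    have h2 : HasDerivAt (fun x : ℝ => x ^ 2) (2 * p 3) (p 3) := by
      simpa using hasDerivAt_pow 2 (p 3)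
    have h3 := (h2.inv (pow_ne_zero 2 h)).const_mul (-2 : ℝ)
    have : (-2 : ℝ) * (-(2 * p 3) / (p 3 ^ 2) ^ 2) = 4 / (p 3) ^ 3 := by
      field_simp; ring
    simp only [this] at h3
    simpa [div_eq_mul_inv] using h3
  have hf : HasFDerivAt (fun p : Fin 4 → ℝ => -2 / (p 3) ^ 2)
      ((4 / p 3 ^ 3) • (ContinuousLinearMap.proj 3 : (Fin 4 → ℝ) →L[ℝ] ℝ)) p :=
    by have := h1.comp_hasFDerivAt p hπ; exact this
  rw [hf.fderiv]
  by_cases hk : k = 3 <;> simp [hk, Pi.single_apply]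

lemma fd_lin (p : Fin 4 → ℝ) (k : Fin 4) :
    fderiv ℝ (fun p : Fin 4 → ℝ => -2 * p 3) p (Pi.single k 1)
      = if k = 3 then -2 else 0 := by
  have hπ : HasFDerivAt (fun q : Fin 4 → ℝ => -2 * q 3)
      ((-2 : ℝ) • (ContinuousLinearMap.proj 3 : (Fin 4 → ℝ) →L[ℝ] ℝ)) p := by
    exact ((-2 : ℝ) • (ContinuousLinearMap.proj (R := ℝ) (φ := fun _ : Fin 4 => ℝ) 3)).hasFDerivAt (x := p)
  rw [hπ.fderiv]
  by_cases hk : k = 3 <;> simp [hk, Pi.single_apply]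

lemma fd_lin2 (p : Fin 4 → ℝ) (k : Fin 4) :
    fderiv ℝ (fun p : Fin 4 → ℝ => 2 * p 3) p (Pi.single k 1)
      = if k = 3 then 2 else 0 := by
  have hπ : HasFDerivAt (fun q : Fin 4 → ℝ => 2 * q 3)
      ((2 : ℝ) • (ContinuousLinearMap.proj 3 : (Fin 4 → ℝ) →L[ℝ] ℝ)) p := by
    exact ((2 : ℝ) • (ContinuousLinearMap.proj (R := ℝ) (φ := fun _ : Fin 4 => ℝ) 3)).hasFDerivAt (x := p)
  rw [hπ.fderiv]
  by_cases hk : k = 3 <;> simp [hk, Pi.single_apply]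

lemma dxE_aba (i j : Fin 4) : dxE i * (dxE j * dxE i) = 0 := by
  rw [← mul_assoc, dxE_swap i j, neg_mul, mul_assoc, dxE_sq, mul_zero, neg_zero]

/-- On `ℂ × ℍ` (the region `w₂ > 0`), the 2-form
`Ω = -i(dw∧dw̄/w₂² + w₂ dz∧dz̄)` satisfies `dΩ = θ ∧ Ω` with Lee form
`θ = dw₂/w₂`: it is locally conformally symplectic (indeed LCK). -/
theorem tricerri_form_is_lcs :
    ∀ p : Fin 4 → ℝ, 0 < p 3 →
      extd2 bigOmegaCoef p = oneForm leeCoef p * twoForm bigOmegaCoef p := by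
  intro p hp
  have h : p 3 ≠ 0 := hp.ne'
  unfold extd2 oneForm twoForm bigOmegaCoef leeCoef
  have h2 : (p 3)⁻¹ * (2 * p 3) = 2 := by field_simp
  simp +decide [Fin.sum_univ_four, fd_main p h, fd_lin p, fd_lin2 p, fderiv_const, dxE_aba,
    dxE_sq, smul_mul_assoc, mul_smul_comm, smul_smul, mul_add, mul_neg, smul_add, h2]
  rw [mul_comm (2 * p 3), h2]
end

section
/- Let α > 1 be real and t ∈ ℝ with t ∉ {ln α, −ln α}. Let A be a 3×3 real matrix with eigenvalues α, β, β̄ where β ∉ ℝ and |β|² = 1/α. Then both block matrices [[I₃, −I₃],[I₃, −e^t·A]] and [[I₃, −I₃],[I₃, −e^t·(A^{-1})^T]] are invertible. -/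
open Polynomial Matrix

lemma my_eval_charpoly (M : Matrix (Fin 3) (Fin 3) ℝ) (r : ℝ) :
    M.charpoly.eval r = (r • (1 : Matrix (Fin 3) (Fin 3) ℝ) - M).det := by
  rw [Matrix.charpoly, ← Polynomial.coe_evalRingHom, RingHom.map_det]
  congr 1
  ext i j
  by_cases h : i = j <;>
    simp [charmatrix_apply, Matrix.sub_apply, Matrix.diagonal_apply, Matrix.one_apply,
      Matrix.smul_apply, h]

lemma my_charpoly_eval_ne
    (A : Matrix (Fin 3) (Fin 3) ℝ)
    (α : ℝ) (β : ℂ) (hβ : β.im ≠ 0)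
    (hchar : (A.map (fun x => (x : ℂ))).charpoly =
        (X - C (α : ℂ)) * (X - C β) * (X - C (starRingEnd ℂ β)))
    (s : ℝ) (hs : s ≠ α) : A.charpoly.eval s ≠ 0 := by
  intro h
  have hmap : (A.map (fun x => (x : ℂ))) = A.map (algebraMap ℝ ℂ) := rfl
  have h2 : ((X - C (α : ℂ)) * (X - C β) * (X - C (starRingEnd ℂ β))).eval (s : ℂ) = 0 := by
    rw [← hchar, hmap, Matrix.charpoly_map, Polynomial.eval_map,
      show ((s : ℂ)) = algebraMap ℝ ℂ s from rfl, Polynomial.eval₂_at_apply, h, map_zero]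
  simp only [eval_mul, eval_sub, eval_X, eval_C, mul_eq_zero, sub_eq_zero] at h2
  rcases h2 with (h2 | h2) | h2
  · exact hs (by exact_mod_cast h2)
  · exact hβ (by simpa using congrArg Complex.im h2.symm)
  · have := congrArg Complex.im h2
    simp [Complex.conj_im] at this
    exact hβ (by linarith)

/-- Let `α > 1` and `t ∈ ℝ` with `t ∉ {ln α, -ln α}`.  Let `A` be a `3×3` real
matrix with `det A = 1` and eigenvalues `α, β, β̄` where `β ∉ ℝ` and
`|β|² = 1/α`.  Then both block matrices `[[I₃, -I₃], [I₃, -e^t·A]]` and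
`[[I₃, -I₃], [I₃, -e^t·(A⁻¹)ᵀ]]` are invertible. -/
theorem fromBlocks_isUnit_of_ne_log
    (A : Matrix (Fin 3) (Fin 3) ℝ) (hdet : A.det = 1)
    (α : ℝ) (hα : 1 < α) (β : ℂ) (hβ : β.im ≠ 0)
    (hβabs : ‖β‖ ^ 2 = α⁻¹)
    (hchar : (A.map (fun x => (x : ℂ))).charpoly =
        (X - C (α : ℂ)) * (X - C β) * (X - C (starRingEnd ℂ β)))
    (t : ℝ) (ht : t ≠ Real.log α) (ht' : t ≠ -Real.log α) :
    IsUnit (Matrix.fromBlocks (1 : Matrix (Fin 3) (Fin 3) ℝ) (-1) 1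
        (-(Real.exp t • A))) ∧
    IsUnit (Matrix.fromBlocks (1 : Matrix (Fin 3) (Fin 3) ℝ) (-1) 1
        (-(Real.exp t • (A⁻¹)ᵀ))) := by
  have hαpos : (0 : ℝ) < α := lt_trans one_pos hα
  constructor
  · rw [Matrix.isUnit_iff_isUnit_det, Matrix.det_fromBlocks_one₁₁, isUnit_iff_ne_zero]
    have key : -(Real.exp t • A) - 1 * (-1) = Real.exp t • (Real.exp (-t) • (1 : Matrix (Fin 3) (Fin 3) ℝ) - A) := by
      rw [smul_sub, smul_smul, ← Real.exp_add]
      simp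
      abel
    rw [key, Matrix.det_smul, ← my_eval_charpoly]
    refine mul_ne_zero (pow_ne_zero _ (Real.exp_ne_zero t)) ?_
    refine my_charpoly_eval_ne A α β hβ hchar _ ?_
    intro h
    apply ht'
    rw [← h, Real.log_exp, neg_neg]
  · rw [Matrix.isUnit_iff_isUnit_det, Matrix.det_fromBlocks_one₁₁, isUnit_iff_ne_zero]
    have hAunit : IsUnit A.det := by rw [hdet]; exact isUnit_one
    have key : -(Real.exp t • (A⁻¹)ᵀ) - 1 * (-1) = ((1 : Matrix (Fin 3) (Fin 3) ℝ) - Real.exp t • A⁻¹)ᵀ := by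
      rw [Matrix.transpose_sub, Matrix.transpose_one, Matrix.transpose_smul,
        Matrix.mul_neg, Matrix.mul_one, sub_neg_eq_add]
      abel
    rw [key, Matrix.det_transpose]
    have hmul : A * ((1 : Matrix (Fin 3) (Fin 3) ℝ) - Real.exp t • A⁻¹)
        = -(Real.exp t • (1 : Matrix (Fin 3) (Fin 3) ℝ) - A) := by
      rw [Matrix.mul_sub, Matrix.mul_one, Matrix.mul_smul, Matrix.mul_nonsing_inv A hAunit]
      abel
    have hd : A.det * ((1 : Matrix (Fin 3) (Fin 3) ℝ) - Real.exp t • A⁻¹).det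
        = -A.charpoly.eval (Real.exp t) := by
      rw [← Matrix.det_mul, hmul, my_eval_charpoly]
      rw [show -(Real.exp t • (1 : Matrix (Fin 3) (Fin 3) ℝ) - A)
          = (-1 : ℝ) • (Real.exp t • (1 : Matrix (Fin 3) (Fin 3) ℝ) - A) by simp]
      rw [Matrix.det_smul]
      norm_num
    rw [hdet, one_mul] at hd
    rw [hd, neg_ne_zero]
    refine my_charpoly_eval_ne A α β hβ hchar _ ?_
    intro h
    apply ht
    rw [← h, Real.log_exp]
end
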